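/- Suppose dim(h_i) = n ≥ 2 and vertex i is ρ̃-recurrent for some density ρ̃. Then there exists a non-faithful density ρ on h_i such that i is ρ-recurrent; moreover ρ can be taken to be a pure state |u⟩⟨u|. -/

import Mathlib

open Matrix MeasureTheory ComplexOrder

/-- Embedding of an internal-state operator `ρ` at site `i` of the direct sum
`H = ⊕_{i ∈ V} h_i` (semifinite CTOQW with `h_i = ℂ^d`): this is `ρ ⊗ |i⟩⟨i|`. -/
def siteEmbed {V : Type*} [DecidableEq V] {d : ℕ} (i : V)
    (ρ : Matrix (Fin d) (Fin d) ℂ) : Matrix (V × Fin d) (V × Fin d) ℂ :=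
  fun a b => if a.1 = i ∧ b.1 = i then ρ a.2 b.2 else 0

/-- The projection `P_k = I ⊗ |k⟩⟨k|` onto the block of site `k`. -/
def siteProj {V : Type*} [DecidableEq V] (d : ℕ) (k : V) :
    Matrix (V × Fin d) (V × Fin d) ℂ :=
  Matrix.diagonal fun x => if x.1 = k then 1 else 0

/-- The `k`-th diagonal block of an operator on `⊕_{i ∈ V} ℂ^d`. -/
def siteBlock {V : Type*} {d : ℕ} (k : V) (X : Matrix (V × Fin d) (V × Fin d) ℂ) :
    Matrix (Fin d) (Fin d) ℂ :=
  fun x y => X (k, x) (k, y)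

/-- Transition probability `p_{ji;ρ}(t) = Tr(e^{tL}(ρ ⊗ |i⟩⟨i|)(I ⊗ |j⟩⟨j|))` of a CTOQW
whose semigroup `e^{tL}` is given by `T`. -/
noncomputable def transP {V : Type*} [Fintype V] [DecidableEq V] {d : ℕ}
    (T : ℝ → Matrix (V × Fin d) (V × Fin d) ℂ →ₗ[ℂ] Matrix (V × Fin d) (V × Fin d) ℂ)
    (j i : V) (ρ : Matrix (Fin d) (Fin d) ℂ) (t : ℝ) : ℝ :=
  ((T t (siteEmbed i ρ) * siteProj d j).trace).re

-- Auxiliary lemmas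
lemma siteEmbed_smul {V : Type*} [DecidableEq V] {d : ℕ} (i : V) (c : ℂ)
    (ρ : Matrix (Fin d) (Fin d) ℂ) : siteEmbed i (c • ρ) = c • siteEmbed i ρ := by
  ext a b
  by_cases h : a.1 = i ∧ b.1 = i <;> simp [siteEmbed, h]

lemma siteEmbed_sum {V : Type*} [DecidableEq V] {d : ℕ} (i : V) {ι : Type*} (s : Finset ι)
    (f : ι → Matrix (Fin d) (Fin d) ℂ) :
    siteEmbed i (∑ k ∈ s, f k) = ∑ k ∈ s, siteEmbed i (f k) := by
  ext a b
  by_cases h : a.1 = i ∧ b.1 = i <;> simp [siteEmbed, h, Matrix.sum_apply]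

lemma transP_smul {V : Type*} [Fintype V] [DecidableEq V] {d : ℕ}
    (T : ℝ → Matrix (V × Fin d) (V × Fin d) ℂ →ₗ[ℂ] Matrix (V × Fin d) (V × Fin d) ℂ)
    (j i : V) (c : ℝ) (ρ : Matrix (Fin d) (Fin d) ℂ) (t : ℝ) :
    transP T j i ((c : ℂ) • ρ) t = c * transP T j i ρ t := by
  unfold transP
  rw [siteEmbed_smul, _root_.map_smul, Matrix.smul_mul, Matrix.trace_smul]
  simp [smul_eq_mul, Complex.mul_re]

lemma transP_sum {V : Type*} [Fintype V] [DecidableEq V] {d : ℕ}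
    (T : ℝ → Matrix (V × Fin d) (V × Fin d) ℂ →ₗ[ℂ] Matrix (V × Fin d) (V × Fin d) ℂ)
    (j i : V) {ι : Type*} (s : Finset ι) (f : ι → Matrix (Fin d) (Fin d) ℂ) (t : ℝ) :
    transP T j i (∑ k ∈ s, f k) t = ∑ k ∈ s, transP T j i (f k) t := by
  unfold transP
  rw [siteEmbed_sum, _root_.map_sum, Matrix.sum_mul, Matrix.trace_sum, Complex.re_sum]

lemma transP_continuous {V : Type*} [Fintype V] [DecidableEq V] {d : ℕ}
    (T : ℝ → Matrix (V × Fin d) (V × Fin d) ℂ →ₗ[ℂ] Matrix (V × Fin d) (V × Fin d) ℂ)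
    (hTcont : ∀ X, Continuous fun t => T t X) (j i : V) (ρ : Matrix (Fin d) (Fin d) ℂ) :
    Continuous (transP T j i ρ) :=
  Complex.continuous_re.comp (((hTcont _).matrix_mul continuous_const).matrix_trace)

lemma ofReal_sum_le' {ι : Type*} (s : Finset ι) (f : ι → ℝ) :
    ENNReal.ofReal (∑ k ∈ s, f k) ≤ ∑ k ∈ s, ENNReal.ofReal (f k) := by
  classical
  induction s using Finset.induction with
  | empty => simp
  | insert _ _ h ih =>
    rw [Finset.sum_insert h, Finset.sum_insert h]
    exact ENNReal.ofReal_add_le.trans (add_le_add le_rfl ih)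

/-- If `dim h_i = d ≥ 2` and the vertex `i` is recurrent for some density, then there is a
non-faithful density `ρ` — which may moreover be taken pure, `ρ = |u⟩⟨u|` — for which
`i` is `ρ`-recurrent. -/
theorem ctoqw_exists_pure_nonfaithful_recurrent {V : Type*} [Fintype V] [DecidableEq V]
    {d : ℕ} (hd : 2 ≤ d)
    (T : ℝ → Matrix (V × Fin d) (V × Fin d) ℂ →ₗ[ℂ] Matrix (V × Fin d) (V × Fin d) ℂ)
    (hT0 : T 0 = LinearMap.id)
    (hTsemi : ∀ s t : ℝ, 0 ≤ s → 0 ≤ t → T (s + t) = (T s).comp (T t))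
    (hTpos : ∀ t : ℝ, 0 ≤ t → ∀ X, X.PosSemidef → (T t X).PosSemidef)
    (hTtr : ∀ t : ℝ, 0 ≤ t → ∀ X, (T t X).trace = X.trace)
    (hTcont : ∀ X, Continuous fun t => T t X)
    (i : V) (σ : Matrix (Fin d) (Fin d) ℂ) (hσ : σ.PosSemidef) (hσ1 : σ.trace = 1)
    (hrec : (∫⁻ t in Set.Ici (0 : ℝ), ENNReal.ofReal (transP T i i σ t)) = ⊤) :
    ∃ ρ : Matrix (Fin d) (Fin d) ℂ,
      ρ.PosSemidef ∧ ρ.trace = 1 ∧ ¬ ρ.PosDef ∧ (∃ u : Fin d → ℂ, ρ = vecMulVec u (star u)) ∧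
        (∫⁻ t in Set.Ici (0 : ℝ), ENNReal.ofReal (transP T i i ρ t)) = ⊤ := by
  classical
  set hH := hσ.1 with hHdef
  set U : Matrix (Fin d) (Fin d) ℂ := (hH.eigenvectorUnitary : Matrix (Fin d) (Fin d) ℂ) with hU
  set u : Fin d → Fin d → ℂ := fun k x => U x k with hu
  set P : Fin d → Matrix (Fin d) (Fin d) ℂ := fun k => vecMulVec (u k) (star (u k)) with hP
  have hUst : star U * U = 1 := (Unitary.mem_iff.mp (hH.eigenvectorUnitary).2).1
  -- spectral decomposition
  have hdecomp : σ = ∑ k, ((hH.eigenvalues k : ℝ) : ℂ) • P k := by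
    conv_lhs => rw [hH.spectral_theorem, Unitary.conjStarAlgAut_apply]
    ext a b
    simp only [Matrix.sum_apply, Matrix.smul_apply, Matrix.mul_apply, Matrix.mul_diagonal,
      Matrix.diagonal_apply, Matrix.star_apply, hP, vecMulVec_apply, Pi.star_apply, hu,
      Function.comp_apply, smul_eq_mul]
    refine Finset.sum_congr rfl fun k _ => ?_
    simp only [mul_ite, mul_zero, Finset.sum_ite_eq', Finset.mem_univ, if_true]
    push_cast
    exact (mul_right_comm (U a k) ((hH.eigenvalues k : ℝ) : ℂ) (star (U b k))).trans
      (mul_comm _ _)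
  -- positivity of each pure block
  have hPpos : ∀ k, (P k).PosSemidef := by
    intro k
    rw [hP]
    simp only
    rw [vecMulVec_eq Unit, ← conjTranspose_replicateCol]
    exact posSemidef_self_mul_conjTranspose _
  have hPtr : ∀ k, (P k).trace = 1 := by
    intro k
    have := congrFun (congrFun hUst k) k
    simp only [Matrix.mul_apply, Matrix.one_apply_eq, Matrix.star_apply] at this
    rw [Matrix.trace]
    simp only [Matrix.diag_apply, hP, vecMulVec_apply, Pi.star_apply, hu]
    rw [← this]
    exact Finset.sum_congr rfl fun x _ => mul_comm _ _
  have hPnd : ∀ k, ¬ (P k).PosDef := by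
    intro k hpd
    have h1 : (P k).rank ≤ 1 := by
      rw [hP]
      simp only
      rw [vecMulVec_eq Unit]
      exact (Matrix.rank_mul_le_left _ _).trans
        ((Matrix.rank_le_card_width _).trans_eq (by simp))
    have h2 : (P k).rank = d := by
      rw [Matrix.rank_of_isUnit _ hpd.isUnit, Fintype.card_fin]
    omega
  -- split the integral
  have hmeas : ∀ k, Measurable fun t => ENNReal.ofReal
      (hH.eigenvalues k * transP T i i (P k) t) :=
    fun k => ((continuous_const.mul (transP_continuous T hTcont i i (P k))).measurable).ennreal_ofReal
  have hle : (∫⁻ t in Set.Ici (0 : ℝ), ENNReal.ofReal (transP T i i σ t))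
      ≤ ∑ k, ∫⁻ t in Set.Ici (0 : ℝ),
        ENNReal.ofReal (hH.eigenvalues k * transP T i i (P k) t) := by
    rw [← lintegral_finset_sum' _ fun k _ => (hmeas k).aemeasurable]
    refine lintegral_mono fun t => ?_
    have : transP T i i σ t = ∑ k, hH.eigenvalues k * transP T i i (P k) t := by
      conv_lhs => rw [hdecomp]
      rw [transP_sum]
      exact Finset.sum_congr rfl fun k _ => transP_smul T i i _ _ t
    rw [this]
    exact ofReal_sum_le' _ _
  rw [hrec] at hle
  have htop : ∃ k, (∫⁻ t in Set.Ici (0 : ℝ),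
      ENNReal.ofReal (hH.eigenvalues k * transP T i i (P k) t)) = ⊤ := by
    by_contra h
    push_neg at h
    exact absurd (top_le_iff.mp hle)
      (ENNReal.sum_lt_top.mpr fun k _ => (h k).lt_top).ne
  obtain ⟨k, hk⟩ := htop
  have hev : 0 ≤ hH.eigenvalues k := hσ.eigenvalues_nonneg k
  have hevpos : 0 < hH.eigenvalues k := by
    rcases hev.lt_or_eq with h | h
    · exact h
    · exfalso; rw [← h] at hk; simp at hk
  have hfin : (∫⁻ t in Set.Ici (0 : ℝ), ENNReal.ofReal (transP T i i (P k) t)) = ⊤ := by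
    have h1 : ∀ t, ENNReal.ofReal (hH.eigenvalues k * transP T i i (P k) t)
        = ENNReal.ofReal (hH.eigenvalues k) * ENNReal.ofReal (transP T i i (P k) t) :=
      fun t => ENNReal.ofReal_mul hev
    have hk' : ENNReal.ofReal (hH.eigenvalues k)
        * (∫⁻ t in Set.Ici (0 : ℝ), ENNReal.ofReal (transP T i i (P k) t)) = ⊤ := by
      rw [← lintegral_const_mul' _ _ ENNReal.ofReal_ne_top, ← hk]
      exact lintegral_congr fun t => (h1 t).symm
    by_contra hne
    exact absurd hk' (ENNReal.mul_ne_top ENNReal.ofReal_ne_top hne)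
  exact ⟨P k, hPpos k, hPtr k, hPnd k, ⟨u k, rfl⟩, hfin⟩
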